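/- Let k ≥ 3 and suppose n ≡ 2 or 3 (mod 4). If x denotes the maximum possible number of equiparity Latin squares in the ensemble of an OA(k,n), then x ≤ (1/2)(k·⌊(k−1)/2⌋·⌈(k−1)/2⌉ − C(k,3)). In particular, x/C(k,3) ≤ 1/4 + O(1/k). -/

import Mathlib

open Finset

private lemma aux_card_lt_fin (m : ℕ) (b : Fin m) :
    (∑ a : Fin m, if a < b then (1:ℕ) else 0) = (b : ℕ) := by
  rw [← Finset.card_filter]
  rw [show univ.filter (fun a : Fin m => a < b) = Finset.Iio b from by ext a; simp]
  simp

private lemma aux_pairs_lt (m : ℕ) (c : Fin m) :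
    (univ.filter (fun q : Fin m × Fin m => q.1 < q.2 ∧ q.2 < c)).card = (c : ℕ).choose 2 := by
  rw [Finset.card_filter, Fintype.sum_prod_type, Finset.sum_comm]
  have h1 : ∀ b : Fin m, (∑ a : Fin m, if a < b ∧ b < c then (1:ℕ) else 0)
      = if (b:ℕ) < (c:ℕ) then (b:ℕ) else 0 := by
    intro b
    by_cases hb : b < c
    · simp only [hb, and_true, if_true, if_pos (Fin.lt_def.mp hb)]
      exact aux_card_lt_fin m b
    · simp [hb, Fin.lt_def.not.mp hb]
  rw [Finset.sum_congr rfl (fun b _ => h1 b)]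
  rw [Fin.sum_univ_eq_sum_range (fun i => if i < (c:ℕ) then i else 0)]
  rw [← Finset.sum_filter]
  rw [show (Finset.range m).filter (fun i => i < (c:ℕ)) = Finset.range (c:ℕ) from by
    ext i; simp; omega]
  rw [Finset.sum_range_id, Nat.choose_two_right]

private lemma aux_sum_choose2 (k : ℕ) : ∑ i ∈ Finset.range k, i.choose 2 = k.choose 3 := by
  rcases Nat.eq_zero_or_pos k with rfl|hk
  · simp
  · rw [show k = (k-1)+1 by omega, Finset.range_eq_Ico,
      show Finset.Ico 0 (k-1+1) = Finset.Icc 0 (k-1) by rfl,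
      ← Nat.sum_Icc_choose (k-1) 2]
    refine (Finset.sum_subset (Finset.Icc_subset_Icc_left (by omega)) ?_).symm
    intro x hx hx2
    simp only [Finset.mem_Icc] at hx hx2
    exact Nat.choose_eq_zero_of_lt (by omega)

private lemma aux_prod_le_half (a b m : ℕ) (h : a + b = m) : a * b ≤ (m/2) * ((m+1)/2) := by
  have h4 : 4 * (a * b) ≤ m * m := by
    subst h
    rcases le_total a b with hab | hab
    · obtain ⟨d, rfl⟩ := Nat.le.dest hab; nlinarith [Nat.zero_le (d*d)]
    · obtain ⟨d, rfl⟩ := Nat.le.dest hab; nlinarith [Nat.zero_le (d*d)]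
  rcases Nat.even_or_odd m with ⟨q, hq⟩ | ⟨q, hq⟩
  · have hm : m / 2 = q := by omega
    have hm2 : (m+1)/2 = q := by omega
    rw [hm, hm2]
    have : m * m = 4 * (q*q) := by subst hq; ring
    omega
  · have hm : m / 2 = q := by omega
    have hm2 : (m+1)/2 = q+1 := by omega
    rw [hm, hm2]
    have : m * m = 4 * (q*(q+1)) + 1 := by subst hq; ring
    omega

private lemma aux_zmod2_cases (z : ZMod 2) : z = 0 ∨ z = 1 := by revert z; decide

private lemma aux_zmod2_add_eq_one (a b : ZMod 2) : a + b = 1 ↔ a ≠ b := by revert a b; decide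

private lemma aux_bipartite_bound (k : ℕ) (c : Fin k) (p : Fin k → Fin k → ZMod 2) :
    (univ.filter (fun q : Fin k × Fin k =>
      q.1 < q.2 ∧ q.1 ≠ c ∧ q.2 ≠ c ∧ p c q.1 + p c q.2 = 1)).card
      ≤ ((k-1)/2) * (k/2) := by
  classical
  set A := univ.filter (fun i : Fin k => i ≠ c ∧ p c i = 0) with hA
  set B := univ.filter (fun i : Fin k => i ≠ c ∧ p c i = 1) with hB
  have hAB : A.card + B.card = k - 1 := by
    rw [← Finset.card_union_of_disjoint]
    · rw [show A ∪ B = univ.filter (fun i : Fin k => i ≠ c) from by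
        ext i
        simp only [hA, hB, Finset.mem_union, Finset.mem_filter, Finset.mem_univ, true_and]
        rcases aux_zmod2_cases (p c i) with h | h <;> simp [h] ]
      rw [Finset.filter_ne', Finset.card_erase_of_mem (Finset.mem_univ c)]
      simp
    · rw [Finset.disjoint_left]
      intro i hi hi'
      simp only [hA, hB, Finset.mem_filter] at hi hi'
      rw [hi.2.2] at hi'
      exact absurd hi'.2.2 (by decide)
  have hinj : (univ.filter (fun q : Fin k × Fin k =>
      q.1 < q.2 ∧ q.1 ≠ c ∧ q.2 ≠ c ∧ p c q.1 + p c q.2 = 1)).card ≤ (A ×ˢ B).card := by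
    apply Finset.card_le_card_of_injOn (fun q => if p c q.1 = 0 then q else q.swap)
    · intro q hq
      simp only [Finset.coe_filter, Set.mem_setOf_eq, Finset.mem_filter, Finset.mem_univ, true_and] at hq
      obtain ⟨hlt, h1, h2, hsum⟩ := hq
      have hne := (aux_zmod2_add_eq_one _ _).mp hsum
      by_cases h0 : p c q.1 = 0
      · have : p c q.2 = 1 := by
          rcases aux_zmod2_cases (p c q.2) with h | h
          · exact absurd (h0.trans h.symm) hne
          · exact h
        simp only [if_pos h0, Finset.mem_coe, Finset.mem_product, hA, hB, Finset.mem_filter,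
          Finset.mem_univ, true_and]
        exact ⟨⟨h1, h0⟩, ⟨h2, this⟩⟩
      · have hq1 : p c q.1 = 1 := (aux_zmod2_cases _).resolve_left h0
        have hq2 : p c q.2 = 0 := by
          rcases aux_zmod2_cases (p c q.2) with h | h
          · exact h
          · exact absurd (hq1.trans h.symm) hne
        simp only [if_neg h0, Finset.mem_coe, Finset.mem_product, hA, hB, Finset.mem_filter,
          Finset.mem_univ, true_and, Prod.fst_swap, Prod.snd_swap]
        exact ⟨⟨h2, hq2⟩, ⟨h1, hq1⟩⟩
    · intro q hq q' hq' heq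
      simp only [Finset.coe_filter, Set.mem_setOf_eq, Finset.mem_univ, true_and] at hq hq'
      simp only at heq
      split_ifs at heq with h h'
      · exact heq
      · exfalso
        have e1 : q.1 = q'.2 := congrArg Prod.fst heq
        have e2 : q.2 = q'.1 := congrArg Prod.snd heq
        have : q'.2 < q'.1 := by rw [← e1, ← e2]; exact hq.1
        exact (lt_asymm this) hq'.1
      · exfalso
        have e1 : q.2 = q'.1 := congrArg Prod.fst heq
        have e2 : q.1 = q'.2 := congrArg Prod.snd heq
        have : q'.2 < q'.1 := by rw [← e1, ← e2]; exact hq.1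
        exact (lt_asymm this) hq'.1
      · exact Prod.swap_injective heq
  calc _ ≤ (A ×ˢ B).card := hinj
    _ = A.card * B.card := Finset.card_product A B
    _ ≤ ((k-1)/2) * ((k-1+1)/2) := aux_prod_le_half _ _ _ hAB
    _ = ((k-1)/2) * (k/2) := by
        rcases Nat.eq_zero_or_pos k with rfl|h
        · simp
        · congr 1; omega

private lemma aux_choose2_odd (n : ℕ) (hn : n % 4 = 2 ∨ n % 4 = 3) :
    (n.choose 2 : ZMod 2) = 1 := by
  have h : n.choose 2 % 2 = 1 := by
    have h2 : 2 * n.choose 2 = n * (n - 1) := by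
      rw [Nat.choose_two_right, Nat.mul_div_cancel' (Nat.even_mul_pred_self n).two_dvd]
    obtain ⟨m, rfl | rfl⟩ : ∃ m, n = 4*m+2 ∨ n = 4*m+3 := ⟨n/4, by omega⟩
    · have : 2 * Nat.choose (4*m+2) 2 = 2 * ((2*m+1)*(4*m+1)) := by
        rw [h2, show 4*m+2-1 = 4*m+1 from by omega]; ring
      have h3 : Nat.choose (4*m+2) 2 = (2*m+1)*(4*m+1) := by omega
      have h4 : ((2*m+1)*(4*m+1)) % 2 = 1 := Nat.odd_iff.mp ⟨4*m*m+3*m, by ring⟩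
      omega
    · have : 2 * Nat.choose (4*m+3) 2 = 2 * ((4*m+3)*(2*m+1)) := by
        rw [h2, show 4*m+3-1 = 4*m+2 from by omega]; ring
      have h3 : Nat.choose (4*m+3) 2 = (4*m+3)*(2*m+1) := by omega
      have h4 : ((4*m+3)*(2*m+1)) % 2 = 1 := Nat.odd_iff.mp ⟨4*m*m+5*m+1, by ring⟩
      omega
  rw [← ZMod.natCast_mod, h, Nat.cast_one]

theorem stmt10 (k n : ℕ) (hk : 3 ≤ k) (hn : n % 4 = 2 ∨ n % 4 = 3)
    (p : Fin k → Fin k → ZMod 2)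
    (hanti : ∀ i j : Fin k, i ≠ j → p j i = p i j + (n.choose 2 : ZMod 2)) :
    2 * (Finset.univ.filter (fun t : Fin k × Fin k × Fin k =>
        t.1 < t.2.1 ∧ t.2.1 < t.2.2 ∧
        p t.1 t.2.1 + p t.1 t.2.2 = 1 ∧
        p t.2.1 t.1 + p t.2.1 t.2.2 = 1 ∧
        p t.2.2 t.1 + p t.2.2 t.2.1 = 1)).card + k.choose 3 ≤
      k * ((k - 1) / 2) * (k / 2) := by
  classical
  have hanti1 : ∀ i j : Fin k, i ≠ j → p j i = p i j + 1 := fun i j h => by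
    rw [hanti i j h, aux_choose2_odd n hn]
  -- the three one-edge indicator functions (grouped by triple in increasing order)
  set g1 : Fin k × Fin k × Fin k → ℕ := fun t =>
    if t.1 < t.2.1 ∧ t.2.1 < t.2.2 ∧ p t.1 t.2.1 + p t.1 t.2.2 = 1 then 1 else 0 with hg1
  set g2 : Fin k × Fin k × Fin k → ℕ := fun t =>
    if t.1 < t.2.1 ∧ t.2.1 < t.2.2 ∧ p t.2.1 t.1 + p t.2.1 t.2.2 = 1 then 1 else 0 with hg2
  set g3 : Fin k × Fin k × Fin k → ℕ := fun t =>
    if t.1 < t.2.1 ∧ t.2.1 < t.2.2 ∧ p t.2.2 t.1 + p t.2.2 t.2.1 = 1 then 1 else 0 with hg3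
  -- the edge-count indicator (grouped by center c = t.1)
  set f : Fin k × Fin k × Fin k → ℕ := fun t =>
    if t.2.1 < t.2.2 ∧ t.2.1 ≠ t.1 ∧ t.2.2 ≠ t.1 ∧ p t.1 t.2.1 + p t.1 t.2.2 = 1
    then 1 else 0 with hf
  -- Step 0 : count of ordered triples is choose 3
  have hO : ∑ t : Fin k × Fin k × Fin k,
      (if t.1 < t.2.1 ∧ t.2.1 < t.2.2 then (1:ℕ) else 0) = k.choose 3 := by
    have e : ∑ t : Fin k × Fin k × Fin k,
        (if t.1 < t.2.1 ∧ t.2.1 < t.2.2 then (1:ℕ) else 0)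
        = ∑ t : Fin k × Fin k × Fin k,
        (if t.2.1 < t.2.2 ∧ t.2.2 < t.1 then (1:ℕ) else 0) :=
      Fintype.sum_equiv ⟨fun t => (t.2.2, t.1, t.2.1), fun t => (t.2.1, t.2.2, t.1),
        fun ⟨a,b,c⟩ => rfl, fun ⟨a,b,c⟩ => rfl⟩ _ _ (fun ⟨a,b,c⟩ => rfl)
    rw [e, Fintype.sum_prod_type]
    have e2 : ∀ c : Fin k, (∑ q : Fin k × Fin k,
        if q.1 < q.2 ∧ q.2 < c then (1:ℕ) else 0) = ((c:ℕ)).choose 2 := by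
      intro c
      rw [← Finset.card_filter]
      exact aux_pairs_lt k c
    rw [Finset.sum_congr rfl (fun c _ => e2 c),
      Fin.sum_univ_eq_sum_range (fun i => i.choose 2), aux_sum_choose2]
  -- Step 1 : pointwise triple identity
  have key : ∀ a b c : Fin k,
      2 * (if a < b ∧ b < c ∧ p a b + p a c = 1 ∧ p b a + p b c = 1 ∧ p c a + p c b = 1
            then (1:ℕ) else 0)
        + (if a < b ∧ b < c then 1 else 0)
      = (if a < b ∧ b < c ∧ p a b + p a c = 1 then 1 else 0)
        + (if a < b ∧ b < c ∧ p b a + p b c = 1 then 1 else 0)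
        + (if a < b ∧ b < c ∧ p c a + p c b = 1 then 1 else 0) := by
    intro a b c
    by_cases h1 : a < b
    · by_cases h2 : b < c
      · have e1 : p b a = p a b + 1 := hanti1 a b (ne_of_lt h1)
        have e2 : p c a = p a c + 1 := hanti1 a c (ne_of_lt (h1.trans h2))
        have e3 : p c b = p b c + 1 := hanti1 b c (ne_of_lt h2)
        rw [e1, e2, e3]
        simp only [eq_true h1, eq_true h2, true_and]
        generalize p a b = u
        generalize p a c = v
        generalize p b c = w
        revert u v w; decide
      · simp only [eq_false h2, false_and, and_false, if_false]
    · simp only [eq_false h1, false_and, if_false]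
  -- Step 2 : pointwise trichotomy identity
  have tri : ∀ t : Fin k × Fin k × Fin k, f t =
      (if t.1 < t.2.1 ∧ t.2.1 < t.2.2 ∧ p t.1 t.2.1 + p t.1 t.2.2 = 1 then 1 else 0)
      + (if t.2.1 < t.1 ∧ t.1 < t.2.2 ∧ p t.1 t.2.1 + p t.1 t.2.2 = 1 then 1 else 0)
      + (if t.2.1 < t.2.2 ∧ t.2.2 < t.1 ∧ p t.1 t.2.1 + p t.1 t.2.2 = 1 then 1 else 0) := by
    rintro ⟨c, a, b⟩
    simp only [hf]
    by_cases hP : p c a + p c b = 1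
    · simp only [eq_true hP, and_true]
      have hab : (a:ℕ) ≠ (c:ℕ) ↔ a ≠ c := by simp [Fin.ext_iff]
      simp only [ne_eq, Fin.lt_def, ← Fin.val_ne_iff]
      split_ifs <;> omega
    · simp only [eq_false hP, and_false, if_false, add_zero]
  -- Step 3 : reindexing the two non-identity pieces
  have re2 : ∑ t : Fin k × Fin k × Fin k,
      (if t.2.1 < t.1 ∧ t.1 < t.2.2 ∧ p t.1 t.2.1 + p t.1 t.2.2 = 1 then (1:ℕ) else 0)
      = ∑ t, g2 t :=
    Fintype.sum_equiv ⟨fun t => (t.2.1, t.1, t.2.2), fun t => (t.2.1, t.1, t.2.2),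
      fun ⟨a,b,c⟩ => rfl, fun ⟨a,b,c⟩ => rfl⟩ _ _ (fun ⟨a,b,c⟩ => rfl)
  have re3 : ∑ t : Fin k × Fin k × Fin k,
      (if t.2.1 < t.2.2 ∧ t.2.2 < t.1 ∧ p t.1 t.2.1 + p t.1 t.2.2 = 1 then (1:ℕ) else 0)
      = ∑ t, g3 t :=
    Fintype.sum_equiv ⟨fun t => (t.2.1, t.2.2, t.1), fun t => (t.2.2, t.1, t.2.1),
      fun ⟨a,b,c⟩ => rfl, fun ⟨a,b,c⟩ => rfl⟩ _ _ (fun ⟨a,b,c⟩ => rfl)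
  -- Step 4 : the total edge count, grouped by center, is bounded
  have hbound : ∑ t : Fin k × Fin k × Fin k, f t ≤ k * (((k-1)/2) * (k/2)) := by
    rw [Fintype.sum_prod_type]
    have e2 : ∀ c : Fin k, (∑ q : Fin k × Fin k,
        if q.1 < q.2 ∧ q.1 ≠ c ∧ q.2 ≠ c ∧ p c q.1 + p c q.2 = 1 then (1:ℕ) else 0)
        ≤ ((k-1)/2) * (k/2) := by
      intro c
      rw [← Finset.card_filter]
      exact aux_bipartite_bound k c p
    calc ∑ c : Fin k, ∑ q : Fin k × Fin k, f (c, q)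
        ≤ ∑ _c : Fin k, ((k-1)/2) * (k/2) := Finset.sum_le_sum (fun c _ => e2 c)
      _ = k * (((k-1)/2) * (k/2)) := by
          rw [Finset.sum_const, Finset.card_univ, Fintype.card_fin, smul_eq_mul]
  -- Assemble
  calc 2 * (Finset.univ.filter (fun t : Fin k × Fin k × Fin k =>
        t.1 < t.2.1 ∧ t.2.1 < t.2.2 ∧
        p t.1 t.2.1 + p t.1 t.2.2 = 1 ∧
        p t.2.1 t.1 + p t.2.1 t.2.2 = 1 ∧
        p t.2.2 t.1 + p t.2.2 t.2.1 = 1)).card + k.choose 3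
      = ∑ t : Fin k × Fin k × Fin k,
          (2 * (if t.1 < t.2.1 ∧ t.2.1 < t.2.2 ∧
            p t.1 t.2.1 + p t.1 t.2.2 = 1 ∧
            p t.2.1 t.1 + p t.2.1 t.2.2 = 1 ∧
            p t.2.2 t.1 + p t.2.2 t.2.1 = 1 then (1:ℕ) else 0)
          + (if t.1 < t.2.1 ∧ t.2.1 < t.2.2 then 1 else 0)) := by
        rw [Finset.sum_add_distrib, ← Finset.mul_sum, ← Finset.card_filter, hO]
    _ = ∑ t : Fin k × Fin k × Fin k, (g1 t + g2 t + g3 t) := by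
        refine Finset.sum_congr rfl (fun t _ => ?_)
        simpa only [hg1, hg2, hg3] using key t.1 t.2.1 t.2.2
    _ = ∑ t, g1 t + ∑ t, g2 t + ∑ t, g3 t := by
        rw [Finset.sum_add_distrib, Finset.sum_add_distrib]
    _ = ∑ t : Fin k × Fin k × Fin k, f t := by
        rw [← re2, ← re3, ← Finset.sum_add_distrib, ← Finset.sum_add_distrib]
        exact (Finset.sum_congr rfl (fun t _ => tri t)).symm
    _ ≤ k * (((k-1)/2) * (k/2)) := hbound
    _ = k * ((k-1)/2) * (k/2) := by rw [mul_assoc]
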